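/- Let p be a prime and x, y, z ∈ ℚ_p with y ≠ 0, z ≠ 0 and xz − y² ≠ 0. Set n = [[1,0,x,y],[0,1,y,z],[0,0,1,0],[0,0,0,1]] and σ = s₂s₁s₂. Then σ·n ∈ P_S(ℚ_p)·s₂·B(p) if and only if v_p(x) ≤ min{−1, v_p(y) − 1, v_p(xz − y²)}. Moreover, in that case, whenever σ·n = q·s₂·γ with q ∈ P_S(ℚ_p) and γ ∈ B(p), one has m₂(q) ∈ [[0, 1],[x⁻¹, −y/x]]·Γ₀(p). -/

import Mathlib

open Matrix

/-- The standard symplectic similitude matrix `J`. -/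
noncomputable def J4 (p : ℕ) [Fact p.Prime] : Matrix (Fin 4) (Fin 4) ℚ_[p] :=
  !![0, 0, 1, 0; 0, 0, 0, 1; -1, 0, 0, 0; 0, -1, 0, 0]

/-- `GSp₄(ℚ_p)`: invertible 4×4 matrices `g` with `gᵀ·J·g = μ·J` for some `μ ≠ 0`. -/
def GSp4 (p : ℕ) [Fact p.Prime] : Set (Matrix (Fin 4) (Fin 4) ℚ_[p]) :=
  {g | g.det ≠ 0 ∧ ∃ μ : ℚ_[p], μ ≠ 0 ∧ gᵀ * J4 p * g = μ • J4 p}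

/-- The congruence subgroup `B(p)` of `GSp₄(ℤ_p)`: all entries in `ℤ_p`, similitude factor a
unit, and the entries at positions (2,1), (3,1), (4,1), (3,2), (4,2), (3,4) in `pℤ_p`. -/
def Bp (p : ℕ) [Fact p.Prime] : Set (Matrix (Fin 4) (Fin 4) ℚ_[p]) :=
  {g | (∀ i j, ‖g i j‖ ≤ 1) ∧ (∃ μ : ℚ_[p], ‖μ‖ = 1 ∧ gᵀ * J4 p * g = μ • J4 p) ∧
    ‖g 1 0‖ ≤ (p : ℝ)⁻¹ ∧ ‖g 2 0‖ ≤ (p : ℝ)⁻¹ ∧ ‖g 3 0‖ ≤ (p : ℝ)⁻¹ ∧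
    ‖g 2 1‖ ≤ (p : ℝ)⁻¹ ∧ ‖g 3 1‖ ≤ (p : ℝ)⁻¹ ∧ ‖g 2 3‖ ≤ (p : ℝ)⁻¹}

/-- The Siegel parabolic `P_S(ℚ_p)`: entries at positions (3,1), (3,2), (4,1), (4,2)
vanish. -/
def PS (p : ℕ) [Fact p.Prime] : Set (Matrix (Fin 4) (Fin 4) ℚ_[p]) :=
  {g | g ∈ GSp4 p ∧ g 2 0 = 0 ∧ g 2 1 = 0 ∧ g 3 0 = 0 ∧ g 3 1 = 0}

/-- The upper-left `GL₂`-block `m₂(q)` of an element of the Siegel parabolic. -/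
def m2S (p : ℕ) [Fact p.Prime] (q : Matrix (Fin 4) (Fin 4) ℚ_[p]) :
    Matrix (Fin 2) (Fin 2) ℚ_[p] :=
  !![q 0 0, q 0 1; q 1 0, q 1 1]

/-- `Γ₀(p) = {γ ∈ GL₂(ℤ_p) : γ₂₁ ∈ pℤ_p}`. -/
def Gamma0 (p : ℕ) [Fact p.Prime] : Set (Matrix (Fin 2) (Fin 2) ℚ_[p]) :=
  {γ | (∀ i j, ‖γ i j‖ ≤ 1) ∧ ‖γ.det‖ = 1 ∧ ‖γ 1 0‖ ≤ (p : ℝ)⁻¹}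

/-- The Weyl element `s₁`. -/
noncomputable def s1 (p : ℕ) [Fact p.Prime] : Matrix (Fin 4) (Fin 4) ℚ_[p] :=
  !![0, 1, 0, 0; 1, 0, 0, 0; 0, 0, 0, 1; 0, 0, 1, 0]

/-- The Weyl element `s₂`. -/
noncomputable def s2 (p : ℕ) [Fact p.Prime] : Matrix (Fin 4) (Fin 4) ℚ_[p] :=
  !![1, 0, 0, 0; 0, 0, 0, 1; 0, 0, 1, 0; 0, -1, 0, 0]

/-- The unipotent matrix `n` attached to `(x, y, z)` (Siegel setting). -/
noncomputable def nS (p : ℕ) [Fact p.Prime] (x y z : ℚ_[p]) : Matrix (Fin 4) (Fin 4) ℚ_[p] :=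
  !![1, 0, x, y; 0, 1, y, z; 0, 0, 1, 0; 0, 0, 0, 1]

namespace Aux10
variable {p : ℕ} [Fact p.Prime]

lemma J4_sq : J4 p * J4 p = -1 := by
  ext i j
  fin_cases i <;> fin_cases j <;>
    (simp [J4, Matrix.mul_apply, Fin.sum_univ_four]) <;> rfl

lemma sigma_n (x y z : ℚ_[p]) :
    s2 p * s1 p * s2 p * nS p x y z = !![0,0,0,1; 0,0,1,0; 0,-1,-y,-z; -1,0,-x,-y] := by
  ext i j
  fin_cases i <;> fin_cases j <;>
    (simp [s1, s2, nS, Matrix.mul_apply, Fin.sum_univ_four]) <;> rfl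

noncomputable def Dm (μ : ℚ_[p]) (γ : Matrix (Fin 4) (Fin 4) ℚ_[p]) :
    Matrix (Fin 4) (Fin 4) ℚ_[p] :=
  μ⁻¹ • !![γ 2 2, γ 3 2, -γ 0 2, -γ 1 2;
           γ 2 3, γ 3 3, -γ 0 3, -γ 1 3;
           -γ 2 0, -γ 3 0, γ 0 0, γ 1 0;
           -γ 2 1, -γ 3 1, γ 0 1, γ 1 1]

lemma Dm_eq (μ : ℚ_[p]) (γ : Matrix (Fin 4) (Fin 4) ℚ_[p]) :
    Dm μ γ = μ⁻¹ • ((-(J4 p)) * γᵀ * J4 p) := by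
  unfold Dm
  congr 1
  ext i j
  fin_cases i <;> fin_cases j <;>
    (simp [J4, Matrix.mul_apply, Fin.sum_univ_four, Matrix.vecMul, dotProduct,
      Matrix.vecHead, Matrix.vecTail])

lemma Dm_mul {μ : ℚ_[p]} (hμ : μ ≠ 0) {γ : Matrix (Fin 4) (Fin 4) ℚ_[p]}
    (hrel : γᵀ * J4 p * γ = μ • J4 p) : Dm μ γ * γ = 1 := by
  rw [Dm_eq, smul_mul_assoc]
  have h1 : (-(J4 p)) * γᵀ * J4 p * γ = μ • ((-(J4 p)) * J4 p) := by
    rw [mul_assoc, mul_assoc, ← mul_assoc γᵀ, hrel, Matrix.mul_smul]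
  rw [h1, neg_mul, J4_sq, neg_neg, smul_smul, inv_mul_cancel₀ hμ, one_smul]

lemma mul_Dm {μ : ℚ_[p]} (hμ : μ ≠ 0) {γ : Matrix (Fin 4) (Fin 4) ℚ_[p]}
    (hrel : γᵀ * J4 p * γ = μ • J4 p) : γ * Dm μ γ = 1 :=
  mul_eq_one_comm.mp (Dm_mul hμ hrel)

lemma forward_eqs {x y z : ℚ_[p]} {q γ : Matrix (Fin 4) (Fin 4) ℚ_[p]} {μ : ℚ_[p]}
    (hμ : μ ≠ 0) (hrel : γᵀ * J4 p * γ = μ • J4 p)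
    (hfac : s2 p * s1 p * s2 p * nS p x y z = q * (s2 p * γ))
    (h20 : q 2 0 = 0) (h21 : q 2 1 = 0) (h30 : q 3 0 = 0) (h31 : q 3 1 = 0) :
    γ 2 3 = y * γ 2 0 + z * γ 2 1 ∧
    γ 1 3 = y * γ 1 0 + z * γ 1 1 ∧
    γ 2 2 = x * γ 2 0 + y * γ 2 1 ∧
    γ 1 2 = x * γ 1 0 + y * γ 1 1 ∧
    μ * q 0 0 = -γ 2 1 ∧ μ * q 0 1 = γ 1 1 ∧ μ * q 1 0 = -γ 2 0 ∧ μ * q 1 1 = γ 1 0 := by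
  have key : q * s2 p =
      (!![0,0,0,1; 0,0,1,0; 0,-1,-y,-z; -1,0,-x,-y] : Matrix (Fin 4) (Fin 4) ℚ_[p])
        * Dm μ γ := by
    rw [← sigma_n x y z, hfac, mul_assoc, mul_assoc, mul_Dm hμ hrel, mul_one]
  have E : ∀ i j : Fin 4, (q * s2 p) i j =
      ((!![0,0,0,1; 0,0,1,0; 0,-1,-y,-z; -1,0,-x,-y] : Matrix (Fin 4) (Fin 4) ℚ_[p])
        * Dm μ γ) i j := fun i j => by rw [key]
  have e1 := E 2 0
  have e2 := E 2 3
  have e3 := E 3 0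
  have e4 := E 3 3
  have f1 := E 0 0
  have f2 := E 0 3
  have f3 := E 1 0
  have f4 := E 1 3
  simp [Dm, s2, Matrix.mul_apply, Fin.sum_univ_four, Matrix.vecHead, Matrix.vecTail,
    h20, h21, h30, h31] at e1 e2 e3 e4 f1 f2 f3 f4
  have hres : ∀ a : ℚ_[p], μ⁻¹ * a = 0 → a = 0 := by
    intro a ha
    rcases mul_eq_zero.mp ha with h' | h'
    · exact absurd h' (inv_ne_zero hμ)
    · exact h'
  refine ⟨?_, ?_, ?_, ?_, ?_, ?_, ?_, ?_⟩
  · have h : μ⁻¹ * (γ 2 3 - (y * γ 2 0 + z * γ 2 1)) = 0 := by linear_combination e1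
    linear_combination hres _ h
  · have h : μ⁻¹ * (γ 1 3 - (y * γ 1 0 + z * γ 1 1)) = 0 := by linear_combination -e2
    linear_combination hres _ h
  · have h : μ⁻¹ * (γ 2 2 - (x * γ 2 0 + y * γ 2 1)) = 0 := by linear_combination e3
    linear_combination hres _ h
  · have h : μ⁻¹ * (γ 1 2 - (x * γ 1 0 + y * γ 1 1)) = 0 := by linear_combination -e4
    linear_combination hres _ h
  · rw [f1, mul_neg, ← mul_assoc, mul_inv_cancel₀ hμ, one_mul]
  · rw [f2, ← mul_assoc, mul_inv_cancel₀ hμ, one_mul]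
  · rw [f3, mul_neg, ← mul_assoc, mul_inv_cancel₀ hμ, one_mul]
  · rw [f4, ← mul_assoc, mul_inv_cancel₀ hμ, one_mul]

lemma norm_add_of_lt {a b : ℚ_[p]} (h : ‖b‖ < ‖a‖) : ‖a + b‖ = ‖a‖ := by
  rw [Padic.add_eq_max_of_ne (ne_of_gt h).symm.symm, max_eq_left h.le]

lemma rel_entries {γ : Matrix (Fin 4) (Fin 4) ℚ_[p]} {μ : ℚ_[p]}
    (hrel : γᵀ * J4 p * γ = μ • J4 p) :
    γ 0 1 * γ 2 3 + γ 1 1 * γ 3 3 - γ 2 1 * γ 0 3 - γ 3 1 * γ 1 3 = μ ∧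
    γ 0 0 * γ 2 2 + γ 1 0 * γ 3 2 - γ 2 0 * γ 0 2 - γ 3 0 * γ 1 2 = μ := by
  have E : ∀ i j : Fin 4, (γᵀ * J4 p * γ) i j = (μ • J4 p) i j := fun i j => by rw [hrel]
  have e1 := E 1 3
  have e2 := E 0 2
  simp [J4, Matrix.mul_apply, Fin.sum_univ_four, Matrix.vecHead, Matrix.vecTail,
    Matrix.transpose_apply] at e1 e2
  constructor
  · linear_combination e1
  · linear_combination e2

lemma core_norms {x y z μ : ℚ_[p]} {γ : Matrix (Fin 4) (Fin 4) ℚ_[p]}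
    (hμ1 : ‖μ‖ = 1)
    (hint : ∀ i j, ‖γ i j‖ ≤ 1)
    (c10 : ‖γ 1 0‖ ≤ (p : ℝ)⁻¹) (c20 : ‖γ 2 0‖ ≤ (p : ℝ)⁻¹) (c30 : ‖γ 3 0‖ ≤ (p : ℝ)⁻¹)
    (c21 : ‖γ 2 1‖ ≤ (p : ℝ)⁻¹) (c31 : ‖γ 3 1‖ ≤ (p : ℝ)⁻¹) (c23 : ‖γ 2 3‖ ≤ (p : ℝ)⁻¹)
    (hrel : γᵀ * J4 p * γ = μ • J4 p)
    (hI : γ 2 3 = y * γ 2 0 + z * γ 2 1) (hII : γ 1 3 = y * γ 1 0 + z * γ 1 1)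
    (hIII : γ 2 2 = x * γ 2 0 + y * γ 2 1) (hIV : γ 1 2 = x * γ 1 0 + y * γ 1 1) :
    x ≠ 0 ∧ (p : ℝ) ≤ ‖x‖ ∧ (p : ℝ) * ‖y‖ ≤ ‖x‖ ∧ ‖x * z - y ^ 2‖ ≤ ‖x‖ ∧
      ‖γ 1 1‖ = 1 ∧ ‖γ 2 2 * γ 1 1 - γ 1 2 * γ 2 1‖ = 1 := by
  obtain ⟨u1, u2⟩ := rel_entries hrel
  have hp1 : (1 : ℝ) < (p : ℝ) := by
    exact_mod_cast Nat.one_lt_cast.mpr (Fact.out : p.Prime).one_lt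
  have hp0 : (0 : ℝ) < (p : ℝ) := by linarith
  have hpi1 : (p : ℝ)⁻¹ < 1 := by
    rw [inv_lt_one_iff₀]; right; exact hp1
  have hpi0 : (0 : ℝ) < (p : ℝ)⁻¹ := by positivity
  -- three small terms bound
  have small : ∀ a b : Fin 4 → Fin 4 → Prop, True := fun _ _ => trivial
  have hb : ∀ (a b : ℚ_[p]), ‖a‖ ≤ (p : ℝ)⁻¹ → ‖b‖ ≤ 1 → ‖a * b‖ ≤ (p : ℝ)⁻¹ := by
    intro a b ha hb
    rw [norm_mul]
    calc ‖a‖ * ‖b‖ ≤ (p : ℝ)⁻¹ * 1 := by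
          apply mul_le_mul ha hb (norm_nonneg _) (le_of_lt hpi0)
      _ = (p : ℝ)⁻¹ := mul_one _
  -- ‖γ 1 1 * γ 3 3‖ = 1
  have h1133 : ‖γ 1 1 * γ 3 3‖ = 1 := by
    have hs : γ 1 1 * γ 3 3 = μ + (γ 2 1 * γ 0 3 + γ 3 1 * γ 1 3 - γ 0 1 * γ 2 3) := by
      linear_combination u1
    have hsmall : ‖γ 2 1 * γ 0 3 + γ 3 1 * γ 1 3 - γ 0 1 * γ 2 3‖ < 1 := by
      have b1 : ‖γ 2 1 * γ 0 3‖ ≤ (p : ℝ)⁻¹ := hb _ _ c21 (hint 0 3)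
      have b2 : ‖γ 3 1 * γ 1 3‖ ≤ (p : ℝ)⁻¹ := hb _ _ c31 (hint 1 3)
      have b3 : ‖γ 0 1 * γ 2 3‖ ≤ (p : ℝ)⁻¹ := by
        rw [mul_comm]; exact hb _ _ c23 (hint 0 1)
      calc ‖γ 2 1 * γ 0 3 + γ 3 1 * γ 1 3 - γ 0 1 * γ 2 3‖
          ≤ max ‖γ 2 1 * γ 0 3 + γ 3 1 * γ 1 3‖ ‖-(γ 0 1 * γ 2 3)‖ := by
            rw [sub_eq_add_neg]; exact Padic.nonarchimedean _ _
        _ ≤ max (max ‖γ 2 1 * γ 0 3‖ ‖γ 3 1 * γ 1 3‖) ‖γ 0 1 * γ 2 3‖ := by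
            rw [norm_neg]
            exact max_le_max (Padic.nonarchimedean _ _) le_rfl
        _ ≤ (p : ℝ)⁻¹ := by
            exact max_le (max_le b1 b2) b3
        _ < 1 := hpi1
    rw [hs, norm_add_of_lt (by rw [hμ1]; exact hsmall), hμ1]
  have h0022 : ‖γ 0 0 * γ 2 2‖ = 1 := by
    have hs : γ 0 0 * γ 2 2 = μ + (γ 2 0 * γ 0 2 + γ 3 0 * γ 1 2 - γ 1 0 * γ 3 2) := by
      linear_combination u2
    have hsmall : ‖γ 2 0 * γ 0 2 + γ 3 0 * γ 1 2 - γ 1 0 * γ 3 2‖ < 1 := by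
      have b1 : ‖γ 2 0 * γ 0 2‖ ≤ (p : ℝ)⁻¹ := hb _ _ c20 (hint 0 2)
      have b2 : ‖γ 3 0 * γ 1 2‖ ≤ (p : ℝ)⁻¹ := hb _ _ c30 (hint 1 2)
      have b3 : ‖γ 1 0 * γ 3 2‖ ≤ (p : ℝ)⁻¹ := hb _ _ c10 (hint 3 2)
      calc ‖γ 2 0 * γ 0 2 + γ 3 0 * γ 1 2 - γ 1 0 * γ 3 2‖
          ≤ max ‖γ 2 0 * γ 0 2 + γ 3 0 * γ 1 2‖ ‖-(γ 1 0 * γ 3 2)‖ := by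
            rw [sub_eq_add_neg]; exact Padic.nonarchimedean _ _
        _ ≤ max (max ‖γ 2 0 * γ 0 2‖ ‖γ 3 0 * γ 1 2‖) ‖γ 1 0 * γ 3 2‖ := by
            rw [norm_neg]
            exact max_le_max (Padic.nonarchimedean _ _) le_rfl
        _ ≤ (p : ℝ)⁻¹ := max_le (max_le b1 b2) b3
        _ < 1 := hpi1
    rw [hs, norm_add_of_lt (by rw [hμ1]; exact hsmall), hμ1]
  have h11 : ‖γ 1 1‖ = 1 := by
    rw [norm_mul] at h1133
    have := hint 1 1
    have := hint 3 3
    nlinarith [norm_nonneg (γ 1 1), norm_nonneg (γ 3 3)]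
  have h22 : ‖γ 2 2‖ = 1 := by
    rw [norm_mul] at h0022
    have := hint 0 0
    have := hint 2 2
    nlinarith [norm_nonneg (γ 0 0), norm_nonneg (γ 2 2)]
  -- the key determinant quantity
  have hE : ‖γ 2 2 * γ 1 1 - γ 1 2 * γ 2 1‖ = 1 := by
    have hlt : ‖-(γ 1 2 * γ 2 1)‖ < ‖γ 2 2 * γ 1 1‖ := by
      rw [norm_neg]
      calc ‖γ 1 2 * γ 2 1‖ ≤ (p : ℝ)⁻¹ := by
            rw [mul_comm]; exact hb _ _ c21 (hint 1 2)
        _ < 1 := hpi1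
        _ = ‖γ 2 2 * γ 1 1‖ := by rw [norm_mul, h22, h11, mul_one]
    rw [sub_eq_add_neg, norm_add_of_lt hlt, norm_mul, h22, h11, mul_one]
  have hxe : x * (γ 2 0 * γ 1 1 - γ 1 0 * γ 2 1) = γ 2 2 * γ 1 1 - γ 1 2 * γ 2 1 := by
    rw [hIII, hIV]; ring
  have hxen : ‖x‖ * ‖γ 2 0 * γ 1 1 - γ 1 0 * γ 2 1‖ = 1 := by
    rw [← norm_mul, hxe, hE]
  have hen : ‖γ 2 0 * γ 1 1 - γ 1 0 * γ 2 1‖ ≤ (p : ℝ)⁻¹ := by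
    have b1 : ‖γ 2 0 * γ 1 1‖ ≤ (p : ℝ)⁻¹ := hb _ _ c20 (hint 1 1)
    have b2 : ‖γ 1 0 * γ 2 1‖ ≤ (p : ℝ)⁻¹ := by
      rw [mul_comm]; exact hb _ _ c21 (hint 1 0)
    calc ‖γ 2 0 * γ 1 1 - γ 1 0 * γ 2 1‖
        ≤ max ‖γ 2 0 * γ 1 1‖ ‖-(γ 1 0 * γ 2 1)‖ := by
          rw [sub_eq_add_neg]; exact Padic.nonarchimedean _ _
      _ ≤ (p : ℝ)⁻¹ := by rw [norm_neg]; exact max_le b1 b2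
  have hx0 : x ≠ 0 := by
    intro h
    rw [h, norm_zero, zero_mul] at hxen
    norm_num at hxen
  have hxnorm : (p : ℝ) ≤ ‖x‖ := by
    have hxpos : (0 : ℝ) < ‖x‖ := norm_pos_iff.mpr hx0
    have hepos : (0 : ℝ) < ‖γ 2 0 * γ 1 1 - γ 1 0 * γ 2 1‖ := by
      rcases lt_or_eq_of_le (norm_nonneg (γ 2 0 * γ 1 1 - γ 1 0 * γ 2 1)) with h | h
      · exact h
      · rw [← h, mul_zero] at hxen; norm_num at hxen
    have : 1 ≤ ‖x‖ * (p : ℝ)⁻¹ := by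
      rw [← hxen]
      exact mul_le_mul_of_nonneg_left hen (le_of_lt hxpos)
    calc (p : ℝ) = 1 * (p : ℝ) := (one_mul _).symm
      _ ≤ (‖x‖ * (p : ℝ)⁻¹) * (p : ℝ) := by
          exact mul_le_mul_of_nonneg_right this (le_of_lt hp0)
      _ = ‖x‖ := by
          rw [mul_assoc, inv_mul_cancel₀ (ne_of_gt hp0), mul_one]
  have hy_le : (p : ℝ) * ‖y‖ ≤ ‖x‖ := by
    have hyid : y * γ 1 1 = γ 1 2 - x * γ 1 0 := by linear_combination -hIV
    have : ‖y‖ = ‖γ 1 2 - x * γ 1 0‖ := by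
      rw [← hyid, norm_mul, h11, mul_one]
    have hb1 : ‖γ 1 2‖ ≤ ‖x‖ * (p : ℝ)⁻¹ := by
      calc ‖γ 1 2‖ ≤ 1 := hint 1 2
        _ ≤ ‖x‖ * (p : ℝ)⁻¹ := by
            rw [← hxen]
            exact mul_le_mul_of_nonneg_left hen (norm_nonneg x)
    have hb2 : ‖x * γ 1 0‖ ≤ ‖x‖ * (p : ℝ)⁻¹ := by
      rw [norm_mul]
      exact mul_le_mul_of_nonneg_left c10 (norm_nonneg x)
    have hcomb : ‖y‖ ≤ ‖x‖ * (p : ℝ)⁻¹ := by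
      rw [this, sub_eq_add_neg]
      calc ‖γ 1 2 + -(x * γ 1 0)‖ ≤ max ‖γ 1 2‖ ‖-(x * γ 1 0)‖ :=
            Padic.nonarchimedean _ _
        _ ≤ ‖x‖ * (p : ℝ)⁻¹ := by rw [norm_neg]; exact max_le hb1 hb2
    calc (p : ℝ) * ‖y‖ ≤ (p : ℝ) * (‖x‖ * (p : ℝ)⁻¹) := by
          exact mul_le_mul_of_nonneg_left hcomb (le_of_lt hp0)
      _ = ‖x‖ := by
          rw [mul_comm ((p : ℝ)) (‖x‖ * (p : ℝ)⁻¹), mul_assoc,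
            inv_mul_cancel₀ (ne_of_gt hp0), mul_one]
  have hd_le : ‖x * z - y ^ 2‖ ≤ ‖x‖ := by
    have hid : (x * z - y ^ 2) * (γ 2 0 * γ 1 1 - γ 1 0 * γ 2 1)
        = γ 2 2 * γ 1 3 - γ 1 2 * γ 2 3 := by
      rw [hI, hII, hIII, hIV]; ring
    have hrhs : ‖γ 2 2 * γ 1 3 - γ 1 2 * γ 2 3‖ ≤ 1 := by
      have b1 : ‖γ 2 2 * γ 1 3‖ ≤ 1 := by
        rw [norm_mul]
        exact mul_le_one₀ (hint 2 2) (norm_nonneg _) (hint 1 3)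
      have b2 : ‖γ 1 2 * γ 2 3‖ ≤ 1 := by
        rw [norm_mul]
        exact mul_le_one₀ (hint 1 2) (norm_nonneg _) (hint 2 3)
      calc ‖γ 2 2 * γ 1 3 - γ 1 2 * γ 2 3‖
          ≤ max ‖γ 2 2 * γ 1 3‖ ‖-(γ 1 2 * γ 2 3)‖ := by
            rw [sub_eq_add_neg]; exact Padic.nonarchimedean _ _
        _ ≤ 1 := by rw [norm_neg]; exact max_le b1 b2
    have := congrArg norm hid
    rw [norm_mul] at this
    have hxpos : (0 : ℝ) < ‖x‖ := norm_pos_iff.mpr hx0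
    calc ‖x * z - y ^ 2‖ = ‖x * z - y ^ 2‖ * (‖x‖ * ‖γ 2 0 * γ 1 1 - γ 1 0 * γ 2 1‖) := by
          rw [hxen, mul_one]
      _ = (‖x * z - y ^ 2‖ * ‖γ 2 0 * γ 1 1 - γ 1 0 * γ 2 1‖) * ‖x‖ := by ring
      _ = ‖γ 2 2 * γ 1 3 - γ 1 2 * γ 2 3‖ * ‖x‖ := by rw [this]
      _ ≤ 1 * ‖x‖ := by
          exact mul_le_mul_of_nonneg_right hrhs (norm_nonneg x)
      _ = ‖x‖ := one_mul _
  exact ⟨hx0, hxnorm, hy_le, hd_le, h11, hE⟩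

lemma val_le_iff_norm {a : ℚ_[p]} (ha : a ≠ 0) (m : ℤ) :
    a.valuation ≤ m ↔ (p : ℝ) ^ (-m) ≤ ‖a‖ := by
  have hp1 : (1 : ℝ) < (p : ℝ) := by
    exact_mod_cast Nat.one_lt_cast.mpr (Fact.out : p.Prime).one_lt
  rw [Padic.norm_eq_zpow_neg_valuation ha, zpow_le_zpow_iff_right₀ hp1, neg_le_neg_iff]

lemma val_iff {x y z : ℚ_[p]} (hy : y ≠ 0) (hd : x * z - y ^ 2 ≠ 0) :
    (Padic.addValuation x ≤
        min ((-1 : ℤ) : WithTop ℤ)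
          (min (Padic.addValuation y - 1) (Padic.addValuation (x * z - y ^ 2)))) ↔
    (x ≠ 0 ∧ (p : ℝ) ≤ ‖x‖ ∧ (p : ℝ) * ‖y‖ ≤ ‖x‖ ∧ ‖x * z - y ^ 2‖ ≤ ‖x‖) := by
  have hp1 : (1 : ℝ) < (p : ℝ) := by
    exact_mod_cast Nat.one_lt_cast.mpr (Fact.out : p.Prime).one_lt
  have hp0 : (0 : ℝ) < (p : ℝ) := by linarith
  constructor
  · intro h
    have hx : x ≠ 0 := by
      intro h0
      rw [h0] at h
      have := le_trans h (min_le_left _ _)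
      rw [show Padic.addValuation (0 : ℚ_[p]) = ⊤ from AddValuation.map_zero _] at this
      exact (WithTop.coe_ne_top (a := (-1 : ℤ))) (top_le_iff.mp this)
    rw [le_min_iff, le_min_iff, Padic.addValuation.apply hx, Padic.addValuation.apply hy,
      Padic.addValuation.apply hd] at h
    obtain ⟨h1, h2, h3⟩ := h
    refine ⟨hx, ?_, ?_, ?_⟩
    · have := (val_le_iff_norm hx (-1)).mp (by exact_mod_cast h1)
      rwa [neg_neg, zpow_one] at this
    · have h2' : x.valuation ≤ y.valuation - 1 := by
        have : ((y.valuation : WithTop ℤ) - 1) = ((y.valuation - 1 : ℤ) : WithTop ℤ) := rfl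
        rw [this] at h2
        exact_mod_cast h2
      have := (val_le_iff_norm hx (y.valuation - 1)).mp h2'
      calc (p : ℝ) * ‖y‖ = (p : ℝ) ^ (1 : ℤ) * (p : ℝ) ^ (-y.valuation) := by
            rw [zpow_one, Padic.norm_eq_zpow_neg_valuation hy]
        _ = (p : ℝ) ^ (-(y.valuation - 1)) := by
            rw [← zpow_add₀ (ne_of_gt hp0)]; ring_nf
        _ ≤ ‖x‖ := this
    · have h3' : x.valuation ≤ (x * z - y ^ 2).valuation := by exact_mod_cast h3
      have := (val_le_iff_norm hx ((x * z - y ^ 2).valuation)).mp h3'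
      rwa [← Padic.norm_eq_zpow_neg_valuation hd] at this
  · rintro ⟨hx, h1, h2, h3⟩
    rw [le_min_iff, le_min_iff, Padic.addValuation.apply hx, Padic.addValuation.apply hy,
      Padic.addValuation.apply hd]
    refine ⟨?_, ?_, ?_⟩
    · have : x.valuation ≤ (-1 : ℤ) := by
        rw [val_le_iff_norm hx, neg_neg, zpow_one]; exact h1
      exact_mod_cast this
    · have : x.valuation ≤ y.valuation - 1 := by
        rw [val_le_iff_norm hx]
        calc (p : ℝ) ^ (-(y.valuation - 1)) = (p : ℝ) ^ (1 : ℤ) * (p : ℝ) ^ (-y.valuation) := by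
              rw [← zpow_add₀ (ne_of_gt hp0)]; ring_nf
          _ = (p : ℝ) * ‖y‖ := by rw [zpow_one, Padic.norm_eq_zpow_neg_valuation hy]
          _ ≤ ‖x‖ := h2
      have h' : ((y.valuation : WithTop ℤ) - 1) = ((y.valuation - 1 : ℤ) : WithTop ℤ) := rfl
      rw [h']
      exact_mod_cast this
    · have : x.valuation ≤ (x * z - y ^ 2).valuation := by
        rw [val_le_iff_norm hx, ← Padic.norm_eq_zpow_neg_valuation hd]; exact h3
      exact_mod_cast this

lemma det_ne_zero_of_rel {g : Matrix (Fin 4) (Fin 4) ℚ_[p]} {μ : ℚ_[p]} (hμ : μ ≠ 0)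
    (h : gᵀ * J4 p * g = μ • J4 p) : g.det ≠ 0 := by
  have hJ : (J4 p).det * (J4 p).det = 1 := by
    have h2 := congrArg Matrix.det (J4_sq (p := p))
    rw [Matrix.det_mul] at h2
    rw [h2]
    have : (-1 : Matrix (Fin 4) (Fin 4) ℚ_[p]) = -(1 : Matrix (Fin 4) (Fin 4) ℚ_[p]) := rfl
    rw [this, Matrix.det_neg, Matrix.det_one, Fintype.card_fin]
    norm_num
  have hd := congrArg Matrix.det h
  rw [Matrix.det_mul, Matrix.det_mul, Matrix.det_transpose, Matrix.det_smul,
    Fintype.card_fin] at hd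
  intro h0
  rw [h0, mul_zero] at hd
  have hJ0 : (J4 p).det ≠ 0 := by
    intro hh; rw [hh, mul_zero] at hJ; norm_num at hJ
  have : μ ^ 4 * (J4 p).det ≠ 0 := mul_ne_zero (pow_ne_zero _ hμ) hJ0
  exact this hd.symm

noncomputable def qB (x y z : ℚ_[p]) : Matrix (Fin 4) (Fin 4) ℚ_[p] :=
  !![0, 1, 0, 0; x⁻¹, -(y/x), 1, 0; 0, 0, -y, -1; 0, 0, -x, 0]

noncomputable def gB (x y z : ℚ_[p]) : Matrix (Fin 4) (Fin 4) ℚ_[p] :=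
  !![-1, 0, 0, 0; y/x, -1, 0, -((x*z-y^2)/x); x⁻¹, 0, 1, y/x; 0, 0, 0, 1]

lemma qB_rel {x y z : ℚ_[p]} (hx : x ≠ 0) :
    (qB x y z)ᵀ * J4 p * qB x y z = (-1 : ℚ_[p]) • J4 p := by
  ext i j
  fin_cases i <;> fin_cases j <;>
    (simp [qB, J4, Matrix.mul_apply, Fin.sum_univ_four, Matrix.vecHead, Matrix.vecTail,
      Matrix.transpose_apply]) <;> field_simp <;> ring

lemma gB_rel {x y z : ℚ_[p]} (hx : x ≠ 0) :
    (gB x y z)ᵀ * J4 p * gB x y z = (-1 : ℚ_[p]) • J4 p := by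
  ext i j
  fin_cases i <;> fin_cases j <;>
    (simp [gB, J4, Matrix.mul_apply, Fin.sum_univ_four, Matrix.vecHead, Matrix.vecTail,
      Matrix.transpose_apply]) <;> field_simp <;> ring

lemma qB_fac {x y z : ℚ_[p]} (hx : x ≠ 0) :
    s2 p * s1 p * s2 p * nS p x y z = qB x y z * (s2 p * gB x y z) := by
  rw [sigma_n]
  ext i j
  fin_cases i <;> fin_cases j <;>
    (simp [qB, gB, s2, Matrix.mul_apply, Fin.sum_univ_four, Matrix.vecHead,
      Matrix.vecTail]) <;> field_simp <;> ring

lemma backward {x y z : ℚ_[p]} (hx : x ≠ 0) (h1 : (p : ℝ) ≤ ‖x‖)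
    (h2 : (p : ℝ) * ‖y‖ ≤ ‖x‖) (h3 : ‖x * z - y ^ 2‖ ≤ ‖x‖) :
    ∃ q ∈ PS p, ∃ γ ∈ Bp p, s2 p * s1 p * s2 p * nS p x y z = q * (s2 p * γ) := by
  have hp1 : (1 : ℝ) < (p : ℝ) := by
    exact_mod_cast Nat.one_lt_cast.mpr (Fact.out : p.Prime).one_lt
  have hp0 : (0 : ℝ) < (p : ℝ) := by linarith
  have hpi1 : (p : ℝ)⁻¹ ≤ 1 := by
    rw [inv_le_one_iff₀]; right; exact hp1.le
  have hpi0 : (0 : ℝ) ≤ (p : ℝ)⁻¹ := by positivity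
  have hxn : (0 : ℝ) < ‖x‖ := norm_pos_iff.mpr hx
  have hne1 : (-1 : ℚ_[p]) ≠ 0 := by norm_num
  have hn1 : ‖(-1 : ℚ_[p])‖ = 1 := by rw [norm_neg, norm_one]
  have hinv : ‖x‖⁻¹ ≤ (p : ℝ)⁻¹ := by
    rw [inv_le_inv₀ hxn hp0]
    exact h1
  have hyx : ‖y‖ / ‖x‖ ≤ (p : ℝ)⁻¹ := by
    rw [div_le_iff₀ hxn]
    calc ‖y‖ = (p : ℝ)⁻¹ * ((p : ℝ) * ‖y‖) := by
          rw [← mul_assoc, inv_mul_cancel₀ (ne_of_gt hp0), one_mul]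
      _ ≤ (p : ℝ)⁻¹ * ‖x‖ := mul_le_mul_of_nonneg_left h2 hpi0
  have hdx : ‖x * z - y ^ 2‖ / ‖x‖ ≤ 1 := by
    rw [div_le_one hxn]; exact h3
  refine ⟨qB x y z, ⟨⟨det_ne_zero_of_rel hne1 (qB_rel hx), ⟨-1, hne1, qB_rel hx⟩⟩,
      ?_, ?_, ?_, ?_⟩,
    gB x y z, ⟨?_, ⟨-1, hn1, gB_rel hx⟩, ?_, ?_, ?_, ?_, ?_, ?_⟩, qB_fac hx⟩
  · simp [qB, Matrix.vecHead, Matrix.vecTail]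
  · simp [qB, Matrix.vecHead, Matrix.vecTail]
  · simp [qB, Matrix.vecHead, Matrix.vecTail]
  · simp [qB, Matrix.vecHead, Matrix.vecTail]
  · intro i j
    fin_cases i <;> fin_cases j <;>
      simp [gB, Matrix.vecHead, Matrix.vecTail] <;>
      first
        | exact le_trans hinv hpi1
        | exact le_trans hyx hpi1
        | exact hdx
  · simpa [gB, Matrix.vecHead, Matrix.vecTail] using hyx
  · simpa [gB, Matrix.vecHead, Matrix.vecTail] using hinv
  · simp [gB, Matrix.vecHead, Matrix.vecTail]
  · simp [gB, Matrix.vecHead, Matrix.vecTail]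
  · simp [gB, Matrix.vecHead, Matrix.vecTail]
  · simpa [gB, Matrix.vecHead, Matrix.vecTail] using hyx

end Aux10

/-- Assume `y ≠ 0`, `z ≠ 0`, `xz − y² ≠ 0`.  Then
`σ·n ∈ P_S(ℚ_p)·s₂·B(p)` iff `v_p(x) ≤ min{−1, v_p(y) − 1, v_p(xz−y²)}` (here `σ = s₂s₁s₂`
and `n` is the unipotent matrix attached to `(x,y,z)`); moreover in that case any
factorization `σ·n = q·s₂·γ` with `q ∈ P_S(ℚ_p)`, `γ ∈ B(p)` satisfies
`m₂(q) ∈ [[0, 1],[x⁻¹, −y/x]]·Γ₀(p)`. -/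
theorem stmt_10 (p : ℕ) [Fact p.Prime] (x y z : ℚ_[p])
    (hy : y ≠ 0) (hz : z ≠ 0) (hdet : x * z - y ^ 2 ≠ 0) :
    ((∃ q ∈ PS p, ∃ γ ∈ Bp p, s2 p * s1 p * s2 p * nS p x y z = q * (s2 p * γ)) ↔
      Padic.addValuation x ≤
        min ((-1 : ℤ) : WithTop ℤ)
          (min (Padic.addValuation y - 1) (Padic.addValuation (x * z - y ^ 2)))) ∧
    (∀ q γ : Matrix (Fin 4) (Fin 4) ℚ_[p], q ∈ PS p → γ ∈ Bp p →
      s2 p * s1 p * s2 p * nS p x y z = q * (s2 p * γ) →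
      ∃ γ' ∈ Gamma0 p, m2S p q = !![0, 1; x⁻¹, -(y / x)] * γ') := by
  constructor
  · constructor
    · rintro ⟨q, hqPS, γ, hγB, hfac⟩
      obtain ⟨hGSp, h20, h21, h30, h31⟩ := hqPS
      obtain ⟨hint, ⟨μ, hμ1, hrel⟩, c10, c20, c30, c21, c31, c23⟩ := hγB
      have hμ0 : μ ≠ 0 := by intro h; rw [h, norm_zero] at hμ1; norm_num at hμ1
      obtain ⟨hI, hII, hIII, hIV, _, _, _, _⟩ :=
        Aux10.forward_eqs hμ0 hrel hfac h20 h21 h30 h31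
      obtain ⟨hx0, n1, n2, n3, _, _⟩ :=
        Aux10.core_norms hμ1 hint c10 c20 c30 c21 c31 c23 hrel hI hII hIII hIV
      exact (Aux10.val_iff hy hdet).mpr ⟨hx0, n1, n2, n3⟩
    · intro hval
      obtain ⟨hx0, n1, n2, n3⟩ := (Aux10.val_iff hy hdet).mp hval
      exact Aux10.backward hx0 n1 n2 n3
  · intro q γ hqPS hγB hfac
    obtain ⟨hGSp, h20, h21, h30, h31⟩ := hqPS
    obtain ⟨hint, ⟨μ, hμ1, hrel⟩, c10, c20, c30, c21, c31, c23⟩ := hγB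
    have hμ0 : μ ≠ 0 := by intro h; rw [h, norm_zero] at hμ1; norm_num at hμ1
    have hμinv : ‖μ⁻¹‖ = 1 := by rw [norm_inv, hμ1, inv_one]
    obtain ⟨hI, hII, hIII, hIV, f1, f2, f3, f4⟩ :=
      Aux10.forward_eqs hμ0 hrel hfac h20 h21 h30 h31
    obtain ⟨hx0, n1, n2, n3, h11, hE⟩ :=
      Aux10.core_norms hμ1 hint c10 c20 c30 c21 c31 c23 hrel hI hII hIII hIV
    have hq00 : q 0 0 = μ⁻¹ * -(γ 2 1) := by
      field_simp
      linear_combination f1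
    have hq01 : q 0 1 = μ⁻¹ * γ 1 1 := by
      field_simp
      linear_combination f2
    have hq10 : q 1 0 = μ⁻¹ * -(γ 2 0) := by
      field_simp
      linear_combination f3
    have hq11 : q 1 1 = μ⁻¹ * γ 1 0 := by
      field_simp
      linear_combination f4
    refine ⟨!![μ⁻¹ * -(γ 2 2), μ⁻¹ * γ 1 2; μ⁻¹ * -(γ 2 1), μ⁻¹ * γ 1 1], ⟨?_, ?_, ?_⟩, ?_⟩
    · intro i j
      fin_cases i <;> fin_cases j <;>
        (simp [Matrix.vecHead, Matrix.vecTail, norm_mul, hμinv]) <;>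
        first
          | exact hint 2 2
          | exact hint 1 2
          | exact hint 2 1
          | exact hint 1 1
    · rw [Matrix.det_fin_two_of]
      have hid : μ⁻¹ * -(γ 2 2) * (μ⁻¹ * γ 1 1) - μ⁻¹ * γ 1 2 * (μ⁻¹ * -(γ 2 1))
          = μ⁻¹ ^ 2 * (-(γ 2 2 * γ 1 1 - γ 1 2 * γ 2 1)) := by ring
      rw [hid, norm_mul, norm_neg, hE, mul_one, norm_pow, hμinv, one_pow]
    · show ‖μ⁻¹ * -(γ 2 1)‖ ≤ (p : ℝ)⁻¹
      rw [norm_mul, hμinv, one_mul, norm_neg]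
      exact c21
    · have e10 : q 1 0 = x⁻¹ * (μ⁻¹ * -(γ 2 2)) + -(y / x) * (μ⁻¹ * -(γ 2 1)) := by
        rw [hq10]
        field_simp
        linear_combination hIII
      have e11 : q 1 1 = x⁻¹ * (μ⁻¹ * γ 1 2) + -(y / x) * (μ⁻¹ * γ 1 1) := by
        rw [hq11]
        field_simp
        linear_combination -hIV
      ext i j
      fin_cases i <;> fin_cases j <;>
        simp [m2S, Matrix.mul_apply, Fin.sum_univ_two, Matrix.vecHead, Matrix.vecTail]
      · linear_combination hq00
      · linear_combination hq01
      · linear_combination e10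
      · linear_combination e11
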